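/- The holomorphic family c ↦ f_c^{k+m}(c) − f_c^k(c), where f_c(z) = e^z + c, is a nonconstant entire function of c for any integers k ≥ 0, m ≥ 1; hence the set of Misiurewicz parameters with preperiod k and period dividing m is discrete in ℂ. -/

import Mathlib

open Filter

private noncomputable def Gfun (n : ℕ) (c : ℂ) : ℂ := (fun z => Complex.exp z + c)^[n] c

private lemma Gfun_succ (n : ℕ) (c : ℂ) :
    Gfun (n+1) c = Complex.exp (Gfun n c) + c := by
  simp [Gfun, Function.iterate_succ_apply']

private lemma Gfun_diff (n : ℕ) : Differentiable ℂ (Gfun n) := by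
  induction n with
  | zero => exact fun x => differentiableAt_id
  | succ n ih =>
    have h : Gfun (n+1) = fun c => Complex.exp (Gfun n c) + c := funext (Gfun_succ n)
    rw [h]
    exact (Complex.differentiable_exp.comp ih).add differentiable_id

private noncomputable def Rfun (c : ℝ) (n : ℕ) : ℝ := (fun x => Real.exp x + c)^[n] c

private lemma Rfun_succ (c : ℝ) (n : ℕ) :
    Rfun c (n+1) = Real.exp (Rfun c n) + c := by
  simp [Rfun, Function.iterate_succ_apply']

private lemma Gfun_real (c : ℝ) (n : ℕ) : Gfun n (c : ℂ) = (Rfun c n : ℝ) := by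
  induction n with
  | zero => simp [Gfun, Rfun]
  | succ n ih =>
    rw [Gfun_succ, ih, Rfun_succ]
    push_cast [Complex.ofReal_exp]
    ring

private lemma Rfun_step (c : ℝ) (hc : 0 ≤ c) (n : ℕ) :
    Rfun c n + 1 + c ≤ Rfun c (n+1) := by
  rw [Rfun_succ]
  have := Real.add_one_le_exp (Rfun c n)
  linarith

private lemma Rfun_mono (c : ℝ) (hc : 0 ≤ c) : Monotone (Rfun c) := by
  apply monotone_nat_of_le_succ
  intro n
  have := Rfun_step c hc n
  linarith

private lemma Rfun_gap (c : ℝ) (hc : 0 ≤ c) (k m : ℕ) (hm : 1 ≤ m) :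
    Rfun c k + 1 + c ≤ Rfun c (k + m) := by
  have h1 := Rfun_step c hc k
  have h2 : Rfun c (k+1) ≤ Rfun c (k+m) := Rfun_mono c hc (by omega)
  linarith

/-- The family c ↦ f_c^{k+m}(c) − f_c^k(c), with f_c(z) = e^z + c, is a nonconstant
entire function of c; hence the set of parameters c with f_c^{k+m}(c) = f_c^k(c)
(in particular the Misiurewicz parameters of preperiod k and period dividing m)
has no accumulation point in ℂ. -/
theorem misiurewicz_parameters_discrete (k m : ℕ) (hk : 1 ≤ k) (hm : 1 ≤ m) :
    (¬ ∃ a : ℂ, ∀ c : ℂ,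
      (fun z => Complex.exp z + c)^[k + m] c - (fun z => Complex.exp z + c)^[k] c = a) ∧
    (∀ c₀ : ℂ, ¬ AccPt c₀ (𝓟 {c : ℂ |
      (fun z => Complex.exp z + c)^[k + m] c = (fun z => Complex.exp z + c)^[k] c})) := by
  have hnc : ¬ ∃ a : ℂ, ∀ c : ℂ, Gfun (k+m) c - Gfun k c = a := by
    rintro ⟨a, ha⟩
    set c : ℝ := ‖a‖ with hc
    have hc0 : 0 ≤ c := norm_nonneg a
    have key := ha (c : ℂ)
    rw [Gfun_real, Gfun_real] at key
    set v : ℝ := Rfun c (k+m) - Rfun c k with hv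
    have hva : (v : ℂ) = a := by push_cast [hv]; linear_combination key
    have hvge : 1 + c ≤ v := by
      have := Rfun_gap c hc0 k m hm
      simp only [hv]; linarith
    have habs : ‖a‖ = |v| := by rw [← hva, Complex.norm_real, Real.norm_eq_abs]
    have : |v| = v := abs_of_nonneg (by linarith)
    rw [this] at habs
    rw [← hc] at habs
    linarith
  constructor
  · exact hnc
  · intro c₀ hacc
    have hfreq : ∃ᶠ z in nhdsWithin c₀ {c₀}ᶜ,
        Gfun (k+m) z - Gfun k z = 0 := by
      have h := accPt_iff_frequently.mp hacc
      rw [frequently_nhdsWithin_iff]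
      exact h.mono (fun z hz => ⟨by simpa [sub_eq_zero, Gfun] using hz.2, hz.1⟩)
    have hdiff : Differentiable ℂ (fun z => Gfun (k+m) z - Gfun k z) :=
      (Gfun_diff (k+m)).sub (Gfun_diff k)
    have han : AnalyticOnNhd ℂ (fun z => Gfun (k+m) z - Gfun k z) Set.univ :=
      fun z _ => hdiff.analyticAt z
    have hzero := han.eqOn_zero_of_preconnected_of_frequently_eq_zero
      isPreconnected_univ (Set.mem_univ c₀) hfreq
    exact hnc ⟨0, fun c => hzero (Set.mem_univ c)⟩
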